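/- Let M be a connected compact smooth manifold and F, G : M → ℝ² smooth maps with |F(x)| = |G(x)| for all x and |∂F/∂τ(x)| = |∂G/∂τ(x)| for all x ∈ M and all tangent vectors τ ∈ T_x M. Then there exists a nonempty open set V ⊆ M and an orthogonal linear transformation T ∈ O(2) such that F(x) = T G(x) for all x ∈ V. -/

import Mathlib

open scoped Manifold
noncomputable section

open Complex ComplexConjugate

/-- Pointwise algebraic core. -/
lemma key_alg (Q R gp Fd Gd qd rd : ℂ) (hgp : gp ≠ 0)
    (hQ : Q * conj Q = 1) (hR : R * conj R = 1)
    (hQR : Q * gp = R * conj gp)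
    (hI : Fd = Q * Gd + gp * qd) (hII : Fd = R * conj Gd + conj gp * rd)
    (hIII : (conj Q * qd).re = 0) (hIV : (conj R * rd).re = 0)
    (hV : normSq Fd = normSq Gd) :
    (conj Q * qd).im * (conj R * rd).im = 0 := by
  set a : ℝ := (conj Q * qd).im with ha
  set b : ℝ := (conj R * rd).im with hb
  have h1 : conj Q * qd = (a : ℂ) * I := by
    apply Complex.ext <;> simp [hIII, ha]
  have h2 : conj R * rd = (b : ℂ) * I := by
    apply Complex.ext <;> simp [hIV, hb]
  have hq : qd = Q * ((a : ℂ) * I) := by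
    have := congrArg (Q * ·) h1
    simpa [← mul_assoc, hQ] using this
  have hr : rd = R * ((b : ℂ) * I) := by
    have := congrArg (R * ·) h2
    simpa [← mul_assoc, hR] using this
  have hF1 : Fd = Q * (Gd + (a : ℂ) * I * gp) := by rw [hI, hq]; ring
  have hF2 : Fd = R * (conj Gd + (b : ℂ) * I * conj gp) := by rw [hII, hr]; ring
  set ρ : ℝ := normSq gp with hρ
  have hρ0 : ρ ≠ 0 := by simpa [hρ] using hgp
  set μ : ℝ := (conj gp * Gd).im with hμ
  -- E1 : a^2 * ρ + 2*a*μ = 0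
  have hnQ : normSq Q = 1 := by
    have h := hQ; rw [Complex.mul_conj] at h; exact_mod_cast h
  have E1 : a ^ 2 * ρ + 2 * a * μ = 0 := by
    have h := hV
    rw [hF1, normSq_mul, hnQ, one_mul] at h
    simp only [normSq_apply, Complex.add_re, Complex.add_im, Complex.mul_re, Complex.mul_im,
      Complex.I_re, Complex.I_im, Complex.ofReal_re, Complex.ofReal_im, Complex.conj_re,
      Complex.conj_im, hρ, hμ] at h ⊢
    nlinarith [h]
  have E2 : b * ρ = a * ρ + 2 * μ := by
    have hc : conj (Q * gp) * (Q * (Gd + (a:ℂ) * I * gp))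
        = conj (R * conj gp) * (R * (conj Gd + (b:ℂ) * I * conj gp)) := by
      rw [← hF1, ← hF2, hQR]
    have hL : conj (Q * gp) * (Q * (Gd + (a:ℂ) * I * gp)) = conj gp * Gd + (a:ℂ) * I * (ρ:ℝ) := by
      have hmc : gp * conj gp = (ρ : ℂ) := by rw [Complex.mul_conj]
      calc conj (Q * gp) * (Q * (Gd + (a:ℂ) * I * gp))
          = (Q * conj Q) * (conj gp * Gd) + (Q * conj Q) * ((a:ℂ) * I * (gp * conj gp)) := by
            rw [map_mul]; ring
        _ = conj gp * Gd + (a:ℂ) * I * (ρ:ℂ) := by rw [hQ, hmc]; ring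
    have hR' : conj (R * conj gp) * (R * (conj Gd + (b:ℂ) * I * conj gp))
        = gp * conj Gd + (b:ℂ) * I * (ρ:ℂ) := by
      have hmc : conj gp * conj (conj gp) = (ρ : ℂ) := by
        rw [Complex.mul_conj, normSq_conj]
      calc conj (R * conj gp) * (R * (conj Gd + (b:ℂ) * I * conj gp))
          = (R * conj R) * (conj (conj gp) * conj Gd)
            + (R * conj R) * ((b:ℂ) * I * (conj gp * conj (conj gp))) := by
            rw [map_mul]; ring
        _ = gp * conj Gd + (b:ℂ) * I * (ρ:ℂ) := by
            rw [hR, hmc, Complex.conj_conj]; ring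
    rw [hL, hR'] at hc
    have him := congrArg Complex.im hc
    simp only [Complex.add_im, Complex.mul_im, Complex.mul_re, Complex.I_re, Complex.I_im,
      Complex.ofReal_re, Complex.ofReal_im, Complex.conj_re, Complex.conj_im, hμ] at him ⊢
    linarith [him]
  -- conclude
  have : a * b * ρ = 0 := by
    have : a * (b * ρ) = a * (a * ρ + 2 * μ) := by rw [E2]
    nlinarith [E1, this]
  have := mul_eq_zero.1 this
  rcases this with h | h
  · exact h
  · exact absurd h hρ0

lemma linforms {E : Type*} [NormedAddCommGroup E] [NormedSpace ℝ E]
    (A B : E → ℝ) (hA : ∀ τ σ, A (τ + σ) = A τ + A σ) (hB : ∀ τ σ, B (τ + σ) = B τ + B σ)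
    (h : ∀ τ, A τ * B τ = 0) : (∀ τ, A τ = 0) ∨ ∀ τ, B τ = 0 := by
  by_contra hc
  push_neg at hc
  obtain ⟨⟨τ₁, h1⟩, τ₂, h2⟩ := hc
  have e1 : B τ₁ = 0 := by
    rcases mul_eq_zero.1 (h τ₁) with h' | h'
    · exact absurd h' h1
    · exact h'
  have e2 : A τ₂ = 0 := by
    rcases mul_eq_zero.1 (h τ₂) with h' | h'
    · exact h'
    · exact absurd h' h2
  have := h (τ₁ + τ₂)
  rw [hA, hB, e1, e2, add_zero, zero_add] at this
  rcases mul_eq_zero.1 this with h' | h'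
  · exact h1 h'
  · exact h2 h'

lemma core {E : Type*} [NormedAddCommGroup E] [NormedSpace ℝ E]
    (s : Set E) (hs : IsOpen s) (f g : E → ℂ)
    (hf : ContDiffOn ℝ 1 f s) (hg : ContDiffOn ℝ 1 g s)
    (hn : ∀ p ∈ s, ‖f p‖ = ‖g p‖)
    (hd : ∀ p ∈ s, ∀ τ, ‖fderiv ℝ f p τ‖ = ‖fderiv ℝ g p τ‖)
    (p₀ : E) (hp₀ : p₀ ∈ s) (hg0 : g p₀ ≠ 0) :
    ∃ W : Set E, IsOpen W ∧ W.Nonempty ∧ W ⊆ s ∧ ∃ c : ℂ, ‖c‖ = 1 ∧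
      ((∀ p ∈ W, f p = c * g p) ∨ (∀ p ∈ W, f p = c * conj (g p))) := by
  classical
  set s' : Set E := s ∩ g ⁻¹' {0}ᶜ with hs'def
  have hs' : IsOpen s' := hg.continuousOn.isOpen_inter_preimage hs isOpen_compl_singleton
  have hp₀' : p₀ ∈ s' := ⟨hp₀, by simpa using hg0⟩
  have hsub : s' ⊆ s := Set.inter_subset_left
  have hgne : ∀ p ∈ s', g p ≠ 0 := fun p hp => by simpa using hp.2
  have hfne : ∀ p ∈ s', f p ≠ 0 := fun p hp => by
    have := hn p (hsub hp)
    intro h0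
    exact hgne p hp (by rwa [h0, norm_zero, eq_comm, norm_eq_zero] at this)
  set q : E → ℂ := fun p => f p * (g p)⁻¹ with hqdef
  set r : E → ℂ := fun p => f p * (conj (g p))⁻¹ with hrdef
  have hf' : ContDiffOn ℝ 1 f s' := hf.mono hsub
  have hg' : ContDiffOn ℝ 1 g s' := hg.mono hsub
  have hcg : ContDiffOn ℝ 1 (fun p => conj (g p)) s' :=
    (Complex.conjCLE.toContinuousLinearMap.contDiff.comp_contDiffOn hg' : )
  have hq : ContDiffOn ℝ 1 q s' := hf'.mul (hg'.inv hgne)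
  have hr : ContDiffOn ℝ 1 r s' :=
    hf'.mul (hcg.inv (fun p hp => by simpa using hgne p hp))
  -- unit modulus of q and r on s'
  have hqnorm : ∀ p ∈ s', ‖q p‖ = 1 := fun p hp => by
    rw [hqdef]
    simp only [norm_mul, norm_inv, hn p (hsub hp)]
    exact mul_inv_cancel₀ (by simpa using hgne p hp)
  have hrnorm : ∀ p ∈ s', ‖r p‖ = 1 := fun p hp => by
    rw [hrdef]
    simp only [norm_mul, norm_inv, RCLike.norm_conj, hn p (hsub hp)]
    exact mul_inv_cancel₀ (by simpa using hgne p hp)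
  -- pointwise dichotomy
  have dich : ∀ p ∈ s', fderiv ℝ q p = 0 ∨ fderiv ℝ r p = 0 := by
    intro p hp
    have hmem : s' ∈ nhds p := hs'.mem_nhds hp
    have hfd : DifferentiableAt ℝ f p := (hf'.contDiffAt hmem).differentiableAt one_ne_zero
    have hgd : DifferentiableAt ℝ g p := (hg'.contDiffAt hmem).differentiableAt one_ne_zero
    have hqd : DifferentiableAt ℝ q p := (hq.contDiffAt hmem).differentiableAt one_ne_zero
    have hrd : DifferentiableAt ℝ r p := (hr.contDiffAt hmem).differentiableAt one_ne_zero
    have hcgd : DifferentiableAt ℝ (fun z => conj (g z)) p :=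
      (hcg.contDiffAt hmem).differentiableAt one_ne_zero
    set Dq := fderiv ℝ q p
    set Dr := fderiv ℝ r p
    set Dg := fderiv ℝ g p
    -- derivative of conj ∘ g
    have hDcg : fderiv ℝ (fun z => conj (g z)) p
        = ((starL' ℝ : ℂ ≃L[ℝ] ℂ) : ℂ →L[ℝ] ℂ).comp Dg := by
      have : fderiv ℝ (fun z => star (g z)) p
          = ((starL' ℝ : ℂ ≃L[ℝ] ℂ) : ℂ →L[ℝ] ℂ).comp Dg := fderiv_star
      simpa using this
    -- (I)
    have hI : fderiv ℝ f p = q p • Dg + g p • Dq := by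
      have hev : (fun z => q z * g z) =ᶠ[nhds p] f :=
        Filter.eventuallyEq_of_mem hmem (fun z hz => by
          rw [hqdef]; exact inv_mul_cancel_right₀ (hgne z hz) (f z))
      rw [← hev.fderiv_eq, fderiv_fun_mul hqd hgd]
    have hII : fderiv ℝ f p = r p • fderiv ℝ (fun z => conj (g z)) p + conj (g p) • Dr := by
      have hev : (fun z => r z * conj (g z)) =ᶠ[nhds p] f :=
        Filter.eventuallyEq_of_mem hmem (fun z hz => by
          rw [hrdef]
          exact inv_mul_cancel_right₀ (by simpa using hgne z hz) (f z))
      rw [← hev.fderiv_eq, fderiv_fun_mul hrd hcgd]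
    -- (III): q * conj q ≡ 1
    have hIII : ∀ τ, (conj (q p) * Dq τ).re = 0 := by
      intro τ
      have hev : (fun z => q z * conj (q z)) =ᶠ[nhds p] (fun _ => (1 : ℂ)) :=
        Filter.eventuallyEq_of_mem hmem (fun z hz => by
          rw [Complex.mul_conj]
          norm_cast
          rw [Complex.normSq_eq_norm_sq, hqnorm z hz]; norm_num)
      have hcqd : DifferentiableAt ℝ (fun z => conj (q z)) p := by
        have : DifferentiableAt ℝ (fun z => star (q z)) p := hqd.star
        simpa using this
      have h0 : fderiv ℝ (fun z => q z * conj (q z)) p = 0 := by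
        rw [hev.fderiv_eq]; exact fderiv_const_apply 1
      have hDcq : fderiv ℝ (fun z => conj (q z)) p
          = ((starL' ℝ : ℂ ≃L[ℝ] ℂ) : ℂ →L[ℝ] ℂ).comp Dq := by
        have : fderiv ℝ (fun z => star (q z)) p
            = ((starL' ℝ : ℂ ≃L[ℝ] ℂ) : ℂ →L[ℝ] ℂ).comp Dq := fderiv_star
        simpa using this
      rw [fderiv_fun_mul hqd hcqd, hDcq] at h0
      have h0τ := congrArg (fun (L : E →L[ℝ] ℂ) => L τ) h0
      simp only [ContinuousLinearMap.add_apply, ContinuousLinearMap.smul_apply,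
        ContinuousLinearMap.comp_apply, ContinuousLinearMap.zero_apply, smul_eq_mul] at h0τ
      have hstar : ((starL' ℝ : ℂ ≃L[ℝ] ℂ) : ℂ →L[ℝ] ℂ) (Dq τ) = conj (Dq τ) := rfl
      rw [hstar] at h0τ
      have : conj (conj (q p) * Dq τ) + conj (q p) * Dq τ = 0 := by
        rw [map_mul, Complex.conj_conj]; linear_combination h0τ
      have := congrArg Complex.re this
      simp only [Complex.add_re, Complex.conj_re, Complex.zero_re] at this
      linarith
    have hIV : ∀ τ, (conj (r p) * Dr τ).re = 0 := by
      intro τ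
      have hev : (fun z => r z * conj (r z)) =ᶠ[nhds p] (fun _ => (1 : ℂ)) :=
        Filter.eventuallyEq_of_mem hmem (fun z hz => by
          rw [Complex.mul_conj]
          norm_cast
          rw [Complex.normSq_eq_norm_sq, hrnorm z hz]; norm_num)
      have hcrd : DifferentiableAt ℝ (fun z => conj (r z)) p := by
        have : DifferentiableAt ℝ (fun z => star (r z)) p := hrd.star
        simpa using this
      have h0 : fderiv ℝ (fun z => r z * conj (r z)) p = 0 := by
        rw [hev.fderiv_eq]; exact fderiv_const_apply 1
      have hDcr : fderiv ℝ (fun z => conj (r z)) p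
          = ((starL' ℝ : ℂ ≃L[ℝ] ℂ) : ℂ →L[ℝ] ℂ).comp Dr := by
        have : fderiv ℝ (fun z => star (r z)) p
            = ((starL' ℝ : ℂ ≃L[ℝ] ℂ) : ℂ →L[ℝ] ℂ).comp Dr := fderiv_star
        simpa using this
      rw [fderiv_fun_mul hrd hcrd, hDcr] at h0
      have h0τ := congrArg (fun (L : E →L[ℝ] ℂ) => L τ) h0
      simp only [ContinuousLinearMap.add_apply, ContinuousLinearMap.smul_apply,
        ContinuousLinearMap.comp_apply, ContinuousLinearMap.zero_apply, smul_eq_mul] at h0τ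
      have hstar : ((starL' ℝ : ℂ ≃L[ℝ] ℂ) : ℂ →L[ℝ] ℂ) (Dr τ) = conj (Dr τ) := rfl
      rw [hstar] at h0τ
      have : conj (conj (r p) * Dr τ) + conj (r p) * Dr τ = 0 := by
        rw [map_mul, Complex.conj_conj]; linear_combination h0τ
      have := congrArg Complex.re this
      simp only [Complex.add_re, Complex.conj_re, Complex.zero_re] at this
      linarith
    -- scalar facts
    have hQn : Complex.normSq (q p) = 1 := by
      rw [Complex.normSq_eq_norm_sq, hqnorm p hp]; norm_num
    have hRn : Complex.normSq (r p) = 1 := by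
      rw [Complex.normSq_eq_norm_sq, hrnorm p hp]; norm_num
    have hQ : q p * conj (q p) = 1 := by rw [Complex.mul_conj, hQn]; norm_num
    have hR : r p * conj (r p) = 1 := by rw [Complex.mul_conj, hRn]; norm_num
    have hQR : q p * g p = r p * conj (g p) := by
      rw [hqdef, hrdef, inv_mul_cancel_right₀ (hgne p hp) (f p),
        inv_mul_cancel_right₀ (by simpa using hgne p hp) (f p)]
    -- apply key_alg for each τ
    have hab : ∀ τ, (conj (q p) * Dq τ).im * (conj (r p) * Dr τ).im = 0 := by
      intro τ
      apply key_alg (q p) (r p) (g p) (fderiv ℝ f p τ) (Dg τ) (Dq τ) (Dr τ)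
        (hgne p hp) hQ hR hQR
      · rw [hI]; simp [smul_eq_mul]
      · rw [hII, hDcg]
        simp only [ContinuousLinearMap.add_apply, ContinuousLinearMap.smul_apply,
          ContinuousLinearMap.comp_apply, smul_eq_mul]
        rfl
      · exact hIII τ
      · exact hIV τ
      · have := hd p (hsub hp) τ
        rw [Complex.normSq_eq_norm_sq, Complex.normSq_eq_norm_sq, this]
    have := linforms (fun τ => (conj (q p) * Dq τ).im) (fun τ => (conj (r p) * Dr τ).im)
      (fun τ σ => by simp [map_add, mul_add]) (fun τ σ => by simp [map_add, mul_add]) hab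
    rcases this with h | h
    · left
      ext τ
      have him := h τ
      have hre := hIII τ
      have hz : conj (q p) * Dq τ = 0 := by
        apply Complex.ext <;> simp [hre, him]
      have hqp0 : conj (q p) ≠ 0 := by
        simp only [ne_eq, map_eq_zero]
        intro h0
        rw [h0] at hQn; simp [Complex.normSq_zero] at hQn
      have := mul_eq_zero.1 hz
      rcases this with h' | h'
      · exact absurd h' hqp0
      · simpa using h'
    · right
      ext τ
      have him := h τ
      have hre := hIV τ
      have hz : conj (r p) * Dr τ = 0 := by
        apply Complex.ext <;> simp [hre, him]
      have hrp0 : conj (r p) ≠ 0 := by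
        simp only [ne_eq, map_eq_zero]
        intro h0
        rw [h0] at hRn; simp [Complex.normSq_zero] at hRn
      have := mul_eq_zero.1 hz
      rcases this with h' | h'
      · exact absurd h' hrp0
      · simpa using h'
  by_cases hcase : ∃ W : Set E, IsOpen W ∧ W.Nonempty ∧ W ⊆ s' ∧ ∀ p ∈ W, fderiv ℝ q p = 0
  · obtain ⟨W, hWo, ⟨w₀, hw₀⟩, hWs, hW0⟩ := hcase
    obtain ⟨ε, hε, hball⟩ := Metric.isOpen_iff.1 hWo w₀ hw₀
    have hBs' : Metric.ball w₀ ε ⊆ s' := hball.trans hWs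
    have hconst : ∀ z ∈ Metric.ball w₀ ε, q z = q w₀ := by
      intro z hz
      refine (convex_ball w₀ ε).is_const_of_fderivWithin_eq_zero
        ((hq.mono hBs').differentiableOn one_ne_zero) (fun x hx => ?_) hz (Metric.mem_ball_self hε)
      rw [fderivWithin_of_isOpen Metric.isOpen_ball hx]
      exact hW0 x (hball hx)
    refine ⟨Metric.ball w₀ ε, Metric.isOpen_ball, ⟨w₀, Metric.mem_ball_self hε⟩,
      fun z hz => hsub (hBs' hz), q w₀, hqnorm w₀ (hWs hw₀), Or.inl ?_⟩
    intro p hp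
    have hgp := hgne p (hBs' hp)
    have hfp : q p * g p = f p := inv_mul_cancel_right₀ hgp (f p)
    rw [hconst p hp] at hfp
    exact hfp.symm
  · have hr0 : ∀ p ∈ s', fderiv ℝ r p = 0 := by
      intro p hp
      by_contra hne
      have hcont : ContinuousOn (fderiv ℝ r) s' := hr.continuousOn_fderiv_of_isOpen hs' le_rfl
      have hca : ContinuousAt (fderiv ℝ r) p := hcont.continuousAt (hs'.mem_nhds hp)
      have hev : ∀ᶠ z in nhds p, fderiv ℝ r z ≠ 0 := hca.eventually_ne hne
      obtain ⟨U, hU1, hUo, hpU⟩ := eventually_nhds_iff.1 hev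
      exact hcase ⟨U ∩ s', hUo.inter hs', ⟨p, hpU, hp⟩, Set.inter_subset_right,
        fun z hz => (dich z hz.2).resolve_right (hU1 z hz.1)⟩
    obtain ⟨ε, hε, hball⟩ := Metric.isOpen_iff.1 hs' p₀ hp₀'
    have hBs' : Metric.ball p₀ ε ⊆ s' := hball
    have hconst : ∀ z ∈ Metric.ball p₀ ε, r z = r p₀ := by
      intro z hz
      refine (convex_ball p₀ ε).is_const_of_fderivWithin_eq_zero
        ((hr.mono hBs').differentiableOn one_ne_zero) (fun x hx => ?_) hz (Metric.mem_ball_self hε)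
      rw [fderivWithin_of_isOpen Metric.isOpen_ball hx]
      exact hr0 x (hBs' hx)
    refine ⟨Metric.ball p₀ ε, Metric.isOpen_ball, ⟨p₀, Metric.mem_ball_self hε⟩,
      fun z hz => hsub (hBs' hz), r p₀, hrnorm p₀ hp₀', Or.inr ?_⟩
    intro p hp
    have hgp : conj (g p) ≠ 0 := by simpa using hgne p (hBs' hp)
    have hfp : r p * conj (g p) = f p := inv_mul_cancel_right₀ hgp (f p)
    rw [hconst p hp] at hfp
    exact hfp.symm

/-- If `F, G : M → ℝ²` are smooth maps on a connected compact smooth manifold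
with `|F(x)| = |G(x)|` everywhere and `|dF_x(τ)| = |dG_x(τ)|` for all tangent vectors `τ`, then
there is a nonempty open set `V ⊆ M` and an orthogonal transformation `T ∈ O(2)` with
`F = T ∘ G` on `V`. -/
theorem stmt1 {m : ℕ} {M : Type*} [TopologicalSpace M]
    [ChartedSpace (EuclideanSpace ℝ (Fin m)) M]
    [IsManifold (𝓡 m) (⊤ : ℕ∞) M] [CompactSpace M] [ConnectedSpace M]
    (F G : M → EuclideanSpace ℝ (Fin 2))
    (hF : ContMDiff (𝓡 m) 𝓘(ℝ, EuclideanSpace ℝ (Fin 2)) (⊤ : ℕ∞) F)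
    (hG : ContMDiff (𝓡 m) 𝓘(ℝ, EuclideanSpace ℝ (Fin 2)) (⊤ : ℕ∞) G)
    (hnorm : ∀ x, ‖F x‖ = ‖G x‖)
    (hderiv : ∀ (x : M) (τ : TangentSpace (𝓡 m) x),
      ‖(show EuclideanSpace ℝ (Fin 2) from mfderiv (𝓡 m) 𝓘(ℝ, EuclideanSpace ℝ (Fin 2)) F x τ)‖ =
      ‖(show EuclideanSpace ℝ (Fin 2) from mfderiv (𝓡 m) 𝓘(ℝ, EuclideanSpace ℝ (Fin 2)) G x τ)‖) :
    ∃ V : Set M, IsOpen V ∧ V.Nonempty ∧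
      ∃ T : EuclideanSpace ℝ (Fin 2) ≃ₗᵢ[ℝ] EuclideanSpace ℝ (Fin 2),
        ∀ x ∈ V, F x = T (G x) := by
  classical
  by_cases hzero : ∀ x, G x = 0
  · refine ⟨Set.univ, isOpen_univ, Set.univ_nonempty, LinearIsometryEquiv.refl ℝ _, ?_⟩
    intro x _
    have h0 : ‖F x‖ = 0 := by rw [hnorm x, hzero x, norm_zero]
    rw [norm_eq_zero.1 h0, hzero x]
    simp
  · push_neg at hzero
    obtain ⟨x₀, hx₀⟩ := hzero
    set e : ℂ ≃ₗᵢ[ℝ] EuclideanSpace ℝ (Fin 2) := Complex.orthonormalBasisOneI.repr with hedef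
    set φ := chartAt (EuclideanSpace ℝ (Fin m)) x₀ with hφdef
    set FΦ : EuclideanSpace ℝ (Fin m) → EuclideanSpace ℝ (Fin 2) := F ∘ φ.symm with hFΦ
    set GΦ : EuclideanSpace ℝ (Fin m) → EuclideanSpace ℝ (Fin 2) := G ∘ φ.symm with hGΦ
    set f : EuclideanSpace ℝ (Fin m) → ℂ := fun p => e.symm (FΦ p) with hfdef
    set g : EuclideanSpace ℝ (Fin m) → ℂ := fun p => e.symm (GΦ p) with hgdef
    -- smoothness in the chart
    have hFΦs : ContMDiffOn (𝓡 m) 𝓘(ℝ, EuclideanSpace ℝ (Fin 2)) (⊤ : ℕ∞) FΦ φ.target :=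
      hF.comp_contMDiffOn contMDiffOn_chart_symm
    have hGΦs : ContMDiffOn (𝓡 m) 𝓘(ℝ, EuclideanSpace ℝ (Fin 2)) (⊤ : ℕ∞) GΦ φ.target :=
      hG.comp_contMDiffOn contMDiffOn_chart_symm
    have hFΦc : ContDiffOn ℝ 1 FΦ φ.target := hFΦs.contDiffOn.of_le (by exact_mod_cast le_top)
    have hGΦc : ContDiffOn ℝ 1 GΦ φ.target := hGΦs.contDiffOn.of_le (by exact_mod_cast le_top)
    have hfc : ContDiffOn ℝ 1 f φ.target :=
      (e.symm.toContinuousLinearEquiv.toContinuousLinearMap.contDiff.comp_contDiffOn hFΦc : )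
    have hgc : ContDiffOn ℝ 1 g φ.target :=
      (e.symm.toContinuousLinearEquiv.toContinuousLinearMap.contDiff.comp_contDiffOn hGΦc : )
    -- norms
    have hnorm' : ∀ p ∈ φ.target, ‖f p‖ = ‖g p‖ := fun p _ => by
      rw [hfdef, hgdef]
      simp only [LinearIsometryEquiv.norm_map]
      exact hnorm _
    -- derivatives
    have hd' : ∀ p ∈ φ.target, ∀ τ, ‖fderiv ℝ f p τ‖ = ‖fderiv ℝ g p τ‖ := by
      intro p hp τ
      have hmem : φ.target ∈ nhds p := φ.open_target.mem_nhds hp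
      have hFΦd : DifferentiableAt ℝ FΦ p := (hFΦc.contDiffAt hmem).differentiableAt one_ne_zero
      have hGΦd : DifferentiableAt ℝ GΦ p := (hGΦc.contDiffAt hmem).differentiableAt one_ne_zero
      have hfe : fderiv ℝ f p = (e.symm.toContinuousLinearEquiv.toContinuousLinearMap).comp
          (fderiv ℝ FΦ p) :=
        (e.symm.toContinuousLinearEquiv.toContinuousLinearMap.hasFDerivAt.comp p
          hFΦd.hasFDerivAt).fderiv
      have hge : fderiv ℝ g p = (e.symm.toContinuousLinearEquiv.toContinuousLinearMap).comp
          (fderiv ℝ GΦ p) :=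
        (e.symm.toContinuousLinearEquiv.toContinuousLinearMap.hasFDerivAt.comp p
          hGΦd.hasFDerivAt).fderiv
      rw [hfe, hge]
      simp only [ContinuousLinearMap.comp_apply]
      have hiso : ∀ z : EuclideanSpace ℝ (Fin 2),
          ‖e.symm.toContinuousLinearEquiv.toContinuousLinearMap z‖ = ‖z‖ := fun z => by
        simp
      rw [hiso, hiso]
      -- now compare fderiv FΦ and fderiv GΦ via mfderiv
      have hφd : MDifferentiableAt (𝓡 m) (𝓡 m) φ.symm p :=
        mdifferentiableAt_atlas_symm (chart_mem_atlas _ x₀) hp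
      have hFd : MDifferentiableAt (𝓡 m) 𝓘(ℝ, EuclideanSpace ℝ (Fin 2)) F (φ.symm p) :=
        (hF (φ.symm p)).mdifferentiableAt (by simp)
      have hGd : MDifferentiableAt (𝓡 m) 𝓘(ℝ, EuclideanSpace ℝ (Fin 2)) G (φ.symm p) :=
        (hG (φ.symm p)).mdifferentiableAt (by simp)
      have hcompF : mfderiv (𝓡 m) 𝓘(ℝ, EuclideanSpace ℝ (Fin 2)) FΦ p
          = (mfderiv (𝓡 m) 𝓘(ℝ, EuclideanSpace ℝ (Fin 2)) F (φ.symm p)).comp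
            (mfderiv (𝓡 m) (𝓡 m) φ.symm p) := mfderiv_comp p hFd hφd
      have hcompG : mfderiv (𝓡 m) 𝓘(ℝ, EuclideanSpace ℝ (Fin 2)) GΦ p
          = (mfderiv (𝓡 m) 𝓘(ℝ, EuclideanSpace ℝ (Fin 2)) G (φ.symm p)).comp
            (mfderiv (𝓡 m) (𝓡 m) φ.symm p) := mfderiv_comp p hGd hφd
      have hFf : mfderiv (𝓡 m) 𝓘(ℝ, EuclideanSpace ℝ (Fin 2)) FΦ p = fderiv ℝ FΦ p :=
        mfderiv_eq_fderiv
      have hGf : mfderiv (𝓡 m) 𝓘(ℝ, EuclideanSpace ℝ (Fin 2)) GΦ p = fderiv ℝ GΦ p :=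
        mfderiv_eq_fderiv
      rw [← hFf, ← hGf, hcompF, hcompG]
      exact hderiv (φ.symm p) _
    -- nonvanishing at the image of x₀
    have hp₀mem : φ x₀ ∈ φ.target := φ.map_source (mem_chart_source _ x₀)
    have hg0 : g (φ x₀) ≠ 0 := by
      rw [hgdef]
      simp only [hGΦ, Function.comp_apply, φ.left_inv (mem_chart_source _ x₀)]
      simp [hx₀]
    obtain ⟨W, hWo, ⟨w, hw⟩, hWs, c, hc1, hcase⟩ :=
      core φ.target φ.open_target f g hfc hgc hnorm' hd' (φ x₀) hp₀mem hg0
    set u : Circle := ⟨c, by simp [Submonoid.unitSphere, hc1]⟩ with hudef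
    refine ⟨φ.source ∩ φ ⁻¹' W,
      φ.continuousOn.isOpen_inter_preimage φ.open_source hWo,
      ⟨φ.symm w, φ.map_target (hWs hw), by
        simp only [Set.mem_preimage, φ.right_inv (hWs hw)]; exact hw⟩, ?_⟩
    rcases hcase with hcc | hcc
    · refine ⟨(e.symm.trans (rotation u)).trans e, ?_⟩
      intro x hx
      have hxW : φ x ∈ W := hx.2
      have := hcc (φ x) hxW
      rw [hfdef, hgdef] at this
      simp only [hFΦ, hGΦ, Function.comp_apply, φ.left_inv hx.1] at this
      have : F x = e (c * e.symm (G x)) := by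
        rw [← this]; simp
      rw [this]
      simp [hudef, rotation_apply]
      exact (rotation_apply u _).symm
    · refine ⟨(e.symm.trans (Complex.conjLIE.trans ((rotation u).trans e))), ?_⟩
      intro x hx
      have hxW : φ x ∈ W := hx.2
      have := hcc (φ x) hxW
      rw [hfdef, hgdef] at this
      simp only [hFΦ, hGΦ, Function.comp_apply, φ.left_inv hx.1] at this
      have : F x = e (c * (starRingEnd ℂ) (e.symm (G x))) := by
        rw [← this]; simp
      rw [this]
      simp [hudef, rotation_apply, Complex.conjLIE_apply]
      exact (rotation_apply u _).symm
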